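/- Let L and E be normed spaces with a norm on L ⊗ E satisfying the contractibility property ‖a · u‖ ≤ ‖a‖‖u‖ for all a ∈ B(L). Define ‖e‖_E := ‖ξ ⊗ e‖ for some (any) unit vector ξ ∈ L. Then the norm on L ⊗ E is a cross-norm with respect to ‖·‖_L and ‖·‖_E: ‖ξ ⊗ e‖ = ‖ξ‖‖e‖_E for all ξ ∈ L, e ∈ E. -/

import Mathlib

/-- A norm on `L ⊗ E` with the contractibility property is a cross-norm:
defining `‖e‖_E := ‖ξ₀ ⊗ e‖` for a fixed unit vector `ξ₀ ∈ L`, one has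
`‖ξ ⊗ e‖ = ‖ξ‖ * ‖e‖_E` for all `ξ ∈ L`, `e ∈ E`. -/
theorem stmt1 {L E : Type*} [NormedAddCommGroup L] [NormedSpace ℝ L]
    [NormedAddCommGroup E] [NormedSpace ℝ E]
    (N : TensorProduct ℝ L E → ℝ)
    (hadd : ∀ u v, N (u + v) ≤ N u + N v)
    (hsmul : ∀ (c : ℝ) u, N (c • u) = |c| * N u)
    (hdef : ∀ u, N u = 0 ↔ u = 0)
    (hcontr : ∀ (a : L →L[ℝ] L) (u : TensorProduct ℝ L E),
      N (LinearMap.rTensor E (a : L →ₗ[ℝ] L) u) ≤ ‖a‖ * N u)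
    (ξ₀ : L) (hξ₀ : ‖ξ₀‖ = 1) :
    ∀ (ξ : L) (e : E), N (ξ ⊗ₜ[ℝ] e) = ‖ξ‖ * N (ξ₀ ⊗ₜ[ℝ] e) := by
  intro ξ e
  rcases eq_or_ne ξ 0 with rfl | hξ
  · rw [show (0 : L) ⊗ₜ[ℝ] e = 0 from by simp, (hdef 0).mpr rfl, norm_zero, zero_mul]
  · have hξ₀ne : ξ₀ ≠ 0 := by
      intro h; rw [h, norm_zero] at hξ₀; norm_num at hξ₀
    obtain ⟨f, hf1, hf0⟩ := exists_dual_vector ℝ ξ₀ (norm_ne_zero_iff.mpr hξ₀ne)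
    obtain ⟨g, hg1, hg⟩ := exists_dual_vector ℝ ξ (norm_ne_zero_iff.mpr hξ)
    -- forward inequality
    have h1 : N (ξ ⊗ₜ[ℝ] e) ≤ ‖ξ‖ * N (ξ₀ ⊗ₜ[ℝ] e) := by
      have haξ₀ : (f.smulRight ξ) ξ₀ = ξ := by
        simp [hf0, hξ₀]
      have := hcontr (f.smulRight ξ) (ξ₀ ⊗ₜ[ℝ] e)
      rw [LinearMap.rTensor_tmul] at this
      simp only [ContinuousLinearMap.coe_coe, haξ₀] at this
      calc N (ξ ⊗ₜ[ℝ] e) ≤ ‖f.smulRight ξ‖ * N (ξ₀ ⊗ₜ[ℝ] e) := this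
        _ = ‖ξ‖ * N (ξ₀ ⊗ₜ[ℝ] e) := by
            rw [ContinuousLinearMap.norm_smulRight_apply, hf1, one_mul]
    -- backward inequality
    have h2 : ‖ξ‖ * N (ξ₀ ⊗ₜ[ℝ] e) ≤ N (ξ ⊗ₜ[ℝ] e) := by
      have hbξ : (g.smulRight ξ₀) ξ = ‖ξ‖ • ξ₀ := by
        simp [hg]
      have := hcontr (g.smulRight ξ₀) (ξ ⊗ₜ[ℝ] e)
      rw [LinearMap.rTensor_tmul] at this
      simp only [ContinuousLinearMap.coe_coe, hbξ] at this
      rw [← TensorProduct.smul_tmul', hsmul, abs_of_nonneg (norm_nonneg ξ),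
        ContinuousLinearMap.norm_smulRight_apply, hg1, hξ₀, one_mul, one_mul] at this
      exact this
    linarith
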